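/- Let k be a field, F irreducible in k[X,Y], and suppose φ, ψ ∈ k(T) satisfy F(φ,ψ) = 0 and k(φ,ψ) = k(T), with φ, ψ ∉ k. Then the degree of the divisor of zeroes of φ in Div(k(T)/k) equals [k(T):k(φ)] which equals deg_Y F, and similarly deg div_0(ψ) = [k(T):k(ψ)] = deg_X F. -/

import Mathlib

open MvPolynomial

noncomputable section

section Helpers
open Polynomial IntermediateField
variable {k : Type*} [Field k]
variable {k : Type*} [Field k]

/-- An element of `RatFunc k` not in `k` is transcendental over `k`. -/
lemma ratfunc_transcendental {φ : RatFunc k}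
    (hφ : φ ∉ Set.range (algebraMap k (RatFunc k))) : Transcendental k φ := by
  intro halg
  have hint : IsIntegral k φ := halg.isIntegral
  have hint2 : IsIntegral (Polynomial k) φ := hint.tower_top
  obtain ⟨p, hp⟩ := IsIntegrallyClosed.isIntegral_iff.mp hint2
  have hinj : Function.Injective (algebraMap (Polynomial k) (RatFunc k)) :=
    IsFractionRing.injective _ _
  have halgp : IsAlgebraic k p := (isAlgebraic_algebraMap_iff hinj).mp (hp ▸ halg)
  have hdeg : p.natDegree = 0 := by
    by_contra hd
    exact (Polynomial.transcendental_X (R := k)).aeval p hd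
      (mem_nonZeroDivisors_of_ne_zero (leadingCoeff_ne_zero.mpr (fun h0 => hd (by simp [h0]))))
      (by simpa using halgp)
  obtain ⟨c, rfl⟩ := Polynomial.natDegree_eq_zero.mp hdeg
  exact hφ ⟨c, by rw [← hp]; simp⟩

lemma ratfunc_aeval_X (p : Polynomial k) :
    Polynomial.aeval (RatFunc.X : RatFunc k) p = algebraMap (Polynomial k) (RatFunc k) p := by
  have : (Polynomial.aeval (RatFunc.X : RatFunc k) : Polynomial k →ₐ[k] RatFunc k) =
      IsScalarTower.toAlgHom k (Polynomial k) (RatFunc k) := by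
    apply Polynomial.algHom_ext
    simp [RatFunc.algebraMap_X]
  rw [this]; rfl

lemma adjoin_ratfunc_X_eq_top :
    IntermediateField.adjoin k ({RatFunc.X} : Set (RatFunc k)) = ⊤ := by
  rw [eq_top_iff]
  intro z _
  rw [IntermediateField.mem_adjoin_simple_iff]
  exact ⟨z.num, z.denom, by rw [ratfunc_aeval_X, ratfunc_aeval_X, RatFunc.num_div_denom]⟩

lemma irreducible_linear_of_isCoprime {A : Type*} [CommRing A] [IsDomain A] {a b : A}
    (ha : a ≠ 0) (h : IsCoprime a b) :
    Irreducible (Polynomial.C b - Polynomial.C a * Polynomial.X) := by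
  set p : Polynomial A := Polynomial.C b - Polynomial.C a * Polynomial.X with hp
  have hrw : p = Polynomial.C (-a) * Polynomial.X + Polynomial.C b := by
    rw [hp]; ring_nf; rw [Polynomial.C_neg]; ring
  have hdeg : p.degree = 1 := by rw [hrw]; exact Polynomial.degree_linear (neg_ne_zero.mpr ha)
  have hc0 : p.coeff 0 = b := by simp [hp]
  have hc1 : p.coeff 1 = -a := by simp [hp]
  have key : ∀ q r : Polynomial A, p = q * r → q.natDegree = 0 → IsUnit q := by
    intro q r hqr hq0
    obtain ⟨c, rfl⟩ := Polynomial.natDegree_eq_zero.mp hq0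
    have hdvd : Polynomial.C c ∣ p := ⟨r, hqr⟩
    rw [Polynomial.C_dvd_iff_dvd_coeff] at hdvd
    have hca : c ∣ a := by have := hc1 ▸ hdvd 1; rwa [dvd_neg] at this
    have hcb : c ∣ b := hc0 ▸ hdvd 0
    exact (Polynomial.isUnit_C).mpr (h.isUnit_of_dvd' hca hcb)
  constructor
  · intro hu
    have := Polynomial.degree_eq_zero_of_isUnit hu
    rw [hdeg] at this; exact one_ne_zero this
  · intro q r hqr
    have hq : q ≠ 0 := by rintro rfl; simp at hqr; rw [hqr] at hdeg; simp at hdeg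
    have hr : r ≠ 0 := by rintro rfl; simp at hqr; rw [hqr] at hdeg; simp at hdeg
    have hsum : q.natDegree + r.natDegree = 1 := by
      have := Polynomial.natDegree_mul hq hr
      rw [← hqr] at this
      rw [← this, Polynomial.natDegree_eq_of_degree_eq_some hdeg]; rfl
    rcases Nat.eq_zero_or_pos q.natDegree with h0 | h1
    · exact Or.inl (key q r hqr h0)
    · have hr0 : r.natDegree = 0 := by omega
      exact Or.inr (key r q (by rw [hqr, mul_comm]) hr0)

lemma core_finrank {k : Type*} [Field k] (F : MvPolynomial (Fin 2) k) (hF : Irreducible F)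
    (α β : RatFunc k)
    (hroot : MvPolynomial.aeval ![α, β] F = 0)
    (hgen : IntermediateField.adjoin k ({α, β} : Set (RatFunc k)) = ⊤)
    (hβ : Transcendental k β) :
    Module.finrank (IntermediateField.adjoin k ({β} : Set (RatFunc k))) (RatFunc k) =
      F.degreeOf 0 := by
  classical
  set L : IntermediateField k (RatFunc k) := IntermediateField.adjoin k {β} with hLdef
  let e1 : MvPolynomial (Fin 1) k ≃ₐ[k] Polynomial k :=
    (MvPolynomial.renameEquiv k (Equiv.equivPUnit.{1,1} (Fin 1))).trans
      (MvPolynomial.pUnitAlgEquiv k : MvPolynomial PUnit.{1} k ≃ₐ[k] Polynomial k)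
  set Fp : Polynomial (Polynomial k) :=
    (MvPolynomial.finSuccEquiv k 1 F).map e1.toAlgHom.toRingHom with hFpdef
  -- irreducibility of Fp
  have hFp_irr : Irreducible Fp := by
    have h1 : Irreducible (MvPolynomial.finSuccEquiv k 1 F) :=
      hF.map (MvPolynomial.finSuccEquiv k 1)
    have h2 := h1.map (Polynomial.mapEquiv e1.toRingEquiv)
    convert h2 using 1
    rfl
  -- degree of Fp
  have hFp_deg : Fp.natDegree = F.degreeOf 0 := by
    rw [hFpdef, Polynomial.natDegree_map_eq_of_injective e1.injective,
      MvPolynomial.natDegree_finSuccEquiv]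
  -- the evaluation identity
  have heval : ∀ P : MvPolynomial (Fin 2) k,
      Polynomial.aeval α
        (((MvPolynomial.finSuccEquiv k 1 P).map e1.toAlgHom.toRingHom).map
          (Polynomial.aeval β : Polynomial k →ₐ[k] RatFunc k).toRingHom) =
        MvPolynomial.aeval ![α, β] P := by
    intro P
    have hcomp : ((Polynomial.aeval α : (RatFunc k)[X] →ₐ[RatFunc k] RatFunc k).restrictScalars
          k).comp
        ((Polynomial.mapAlgHom (Polynomial.aeval β : Polynomial k →ₐ[k] RatFunc k)).comp
          ((Polynomial.mapAlgHom e1.toAlgHom).comp (MvPolynomial.finSuccEquiv k 1).toAlgHom)) =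
        MvPolynomial.aeval ![α, β] := by
      apply MvPolynomial.algHom_ext
      intro i
      refine Fin.cases ?_ ?_ i
      · simp only [AlgHom.coe_comp, AlgHom.coe_restrictScalars', Function.comp_apply,
          AlgEquiv.toAlgHom_eq_coe, AlgHom.coe_coe, MvPolynomial.finSuccEquiv_X_zero, AlgEquiv.coe_toAlgHom,
          Polynomial.coe_mapAlgHom, Polynomial.map_X, Polynomial.aeval_X,
          MvPolynomial.aeval_X, Matrix.cons_val_zero]
      · intro j
        have hj : j = 0 := Subsingleton.elim j 0
        subst hj
        simp only [AlgHom.coe_comp, AlgHom.coe_restrictScalars', Function.comp_apply,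
          AlgEquiv.toAlgHom_eq_coe, AlgHom.coe_coe, MvPolynomial.finSuccEquiv_X_succ, AlgEquiv.coe_toAlgHom,
          Polynomial.coe_mapAlgHom, Polynomial.map_C, Polynomial.aeval_C,
          MvPolynomial.aeval_X]
        have hsucc : Fin.succ (0 : Fin 1) = (1 : Fin 2) := rfl
        simp [e1, MvPolynomial.pUnitAlgEquiv, hsucc]
    have h2 := DFunLike.congr_fun hcomp P
    simp only [AlgHom.coe_comp, AlgHom.coe_restrictScalars', Function.comp_apply,
      AlgEquiv.toAlgHom_eq_coe, AlgHom.coe_coe, Polynomial.coe_mapAlgHom, AlgEquiv.coe_toAlgHom] at h2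
    exact h2
  have hg_inj : Function.Injective (Polynomial.aeval β : Polynomial k →ₐ[k] RatFunc k) :=
    transcendental_iff_injective.mp hβ
  have hFp_ne : Fp ≠ 0 := hFp_irr.ne_zero
  -- the degree is positive
  have hdeg_pos : Fp.natDegree ≠ 0 := by
    intro h0
    obtain ⟨a, ha⟩ := Polynomial.natDegree_eq_zero.mp h0
    have h1 := heval F
    rw [← hFpdef, ← ha] at h1
    simp only [Polynomial.map_C, Polynomial.aeval_C] at h1
    rw [hroot] at h1
    have : a = 0 := hg_inj (by simpa using h1)
    rw [this] at ha
    exact hFp_ne (by rw [← ha, map_zero])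
  -- Fp is primitive
  have hFp_prim : Fp.IsPrimitive := by
    intro c hdvd
    obtain ⟨d, hd⟩ := hdvd
    rcases hFp_irr.isUnit_or_isUnit hd with h | h
    · exact Polynomial.isUnit_C.mp h
    · exfalso
      apply hdeg_pos
      rw [hd, Polynomial.natDegree_mul (fun h0 => hFp_ne (by simp [hd, h0]))
        (fun h0 => hFp_ne (by simp [hd, h0])), Polynomial.natDegree_C,
        Polynomial.natDegree_eq_zero_of_isUnit h]
  -- the generator of L
  set Φ : L := IntermediateField.AdjoinSimple.gen k β with hΦdef
  set gL : Polynomial k →ₐ[k] L := Polynomial.aeval Φ with hgLdef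
  have hcompL : ∀ p : Polynomial k, algebraMap L (RatFunc k) (gL p) = Polynomial.aeval β p := by
    intro p
    have h := Polynomial.aeval_algHom_apply L.val Φ p
    simp only [IntermediateField.coe_val] at h
    rw [hgLdef]
    simp only [IntermediateField.algebraMap_apply]
    rw [← h, hΦdef]
    simp
  have hgL_inj : Function.Injective gL := by
    intro x y hxy
    apply hg_inj
    show Polynomial.aeval β x = Polynomial.aeval β y
    rw [← hcompL, ← hcompL, hxy]
  letI : Algebra (Polynomial k) L := gL.toRingHom.toAlgebra
  have halg_eq : ∀ p : Polynomial k, algebraMap (Polynomial k) L p = gL p := fun _ => rfl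
  haveI hFR : IsFractionRing (Polynomial k) L := by
    constructor
    constructor
    · rintro ⟨y, hy⟩
      refine isUnit_iff_ne_zero.mpr (fun h0 => ?_)
      have hy0 : y ≠ 0 := nonZeroDivisors.ne_zero hy
      exact hy0 (hgL_inj (by rw [← halg_eq y, h0, map_zero]))
    · intro z
      obtain ⟨r, s, hz⟩ := (IntermediateField.mem_adjoin_simple_iff k (z : RatFunc k)).mp z.2
      by_cases hs : Polynomial.aeval β s = 0
      · refine ⟨⟨0, 1⟩, ?_⟩
        have hz0 : (z : RatFunc k) = 0 := by rw [hz, hs, div_zero]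
        have : z = 0 := Subtype.coe_injective hz0
        simp [this]
      · have hs0 : s ≠ 0 := fun h => hs (by simp [h])
        refine ⟨⟨r, ⟨s, mem_nonZeroDivisors_of_ne_zero hs0⟩⟩, ?_⟩
        apply Subtype.coe_injective
        dsimp only
        have h1 : ((z * algebraMap (Polynomial k) L s : L) : RatFunc k) =
            (z : RatFunc k) * algebraMap L (RatFunc k) (algebraMap (Polynomial k) L s) := by
          push_cast
          rfl
        rw [h1, halg_eq, hcompL, hz, div_mul_cancel₀ _ hs]
        exact (hcompL r).symm
    · intro x y h
      exact ⟨1, by simpa using hgL_inj (by rw [← halg_eq, ← halg_eq, h])⟩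
  -- Gauss lemma
  have hG_irr : Irreducible (Fp.map (algebraMap (Polynomial k) L)) :=
    (hFp_prim.irreducible_iff_irreducible_map_fraction_map (K := L)).mp hFp_irr
  set G : Polynomial L := Fp.map (algebraMap (Polynomial k) L) with hGdef
  have halgmap_inj : Function.Injective (algebraMap (Polynomial k) L) := hgL_inj
  have hG_ne : G ≠ 0 := fun h0 =>
    hFp_ne (Polynomial.map_injective _ halgmap_inj
      (by rw [← hGdef, h0, Polynomial.map_zero]))
  have hG_deg : G.natDegree = Fp.natDegree := by
    rw [hGdef]
    exact Polynomial.natDegree_map_eq_of_injective halgmap_inj Fp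
  have hGa : Polynomial.aeval α G = 0 := by
    have h1 : G.map (algebraMap L (RatFunc k)) =
        Fp.map (Polynomial.aeval β : Polynomial k →ₐ[k] RatFunc k).toRingHom := by
      rw [hGdef, Polynomial.map_map]
      congr 1
      exact RingHom.ext fun p => hcompL p
    have h2 : Polynomial.aeval α G =
        Polynomial.eval α (G.map (algebraMap L (RatFunc k))) := by
      rw [Polynomial.aeval_def, Polynomial.eval₂_eq_eval_map]
    rw [h2, h1, ← Polynomial.coe_aeval_eq_eval, heval F, hroot]
  have hint : IsIntegral L α := IsAlgebraic.isIntegral ⟨G, hG_ne, hGa⟩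
  have hlc : G.leadingCoeff ≠ 0 := Polynomial.leadingCoeff_ne_zero.mpr hG_ne
  have hmin : minpoly L α = G * Polynomial.C G.leadingCoeff⁻¹ :=
    (minpoly.eq_of_irreducible hG_irr hGa).symm
  have hmindeg : (minpoly L α).natDegree = F.degreeOf 0 := by
    rw [hmin, Polynomial.natDegree_mul hG_ne
      (fun h0 => inv_ne_zero hlc (Polynomial.C_eq_zero.mp h0)),
      Polynomial.natDegree_C, add_zero, hG_deg, hFp_deg]
  have htop : IntermediateField.adjoin L {α} = ⊤ := by
    apply IntermediateField.restrictScalars_injective k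
    rw [IntermediateField.restrictScalars_top, hLdef,
      IntermediateField.adjoin_simple_adjoin_simple, ← hgen, Set.pair_comm]
  have hfr : Module.finrank L (RatFunc k) = (minpoly L α).natDegree := by
    have h1 := IntermediateField.adjoin.finrank hint
    rw [htop] at h1
    rw [← h1]
    exact ((IntermediateField.topEquiv (F := L) (E := RatFunc k)).toLinearEquiv.finrank_eq).symm
  exact hfr.trans hmindeg

lemma luroth_finrank {k : Type*} [Field k] (φ : RatFunc k) (hφ0 : φ ≠ 0)
    (htr : Transcendental k φ) :
    max φ.num.natDegree φ.denom.natDegree =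
      Module.finrank (IntermediateField.adjoin k ({φ} : Set (RatFunc k))) (RatFunc k) := by
  classical
  have hu0 : φ.num ≠ 0 := RatFunc.num_ne_zero hφ0
  have hw0 : φ.denom ≠ 0 := φ.denom_ne_zero
  let inc : Polynomial k →ₐ[k] MvPolynomial (Fin 2) k := Polynomial.aeval (MvPolynomial.X 0)
  set F₀ : MvPolynomial (Fin 2) k :=
    inc φ.num - MvPolynomial.X 1 * inc φ.denom with hF₀def
  -- the root property
  have hval : ∀ p : Polynomial k, MvPolynomial.aeval ![RatFunc.X, φ] (inc p) =
      algebraMap (Polynomial k) (RatFunc k) p := by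
    intro p
    show MvPolynomial.aeval ![RatFunc.X, φ] (Polynomial.aeval (MvPolynomial.X 0) p) = _
    rw [← Polynomial.aeval_algHom_apply, MvPolynomial.aeval_X, Matrix.cons_val_zero,
      ratfunc_aeval_X]
  have hroot : MvPolynomial.aeval ![RatFunc.X, φ] F₀ = 0 := by
    rw [hF₀def, map_sub, map_mul, MvPolynomial.aeval_X, hval, hval]
    simp only [Matrix.cons_val_one, Matrix.head_cons]
    rw [sub_eq_zero, ← div_eq_iff (RatFunc.algebraMap_ne_zero hw0)]
    exact RatFunc.num_div_denom φ
  -- generation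
  have hgen : IntermediateField.adjoin k ({RatFunc.X, φ} : Set (RatFunc k)) = ⊤ := by
    rw [eq_top_iff, ← adjoin_ratfunc_X_eq_top]
    exact IntermediateField.adjoin.mono _ _ _ (Set.singleton_subset_iff.mpr (by simp))
  -- computing finSuccEquiv of (inc p)
  have hJhom : (MvPolynomial.finSuccEquiv k 1).toAlgHom.comp inc =
      Polynomial.mapAlgHom (Algebra.ofId k (MvPolynomial (Fin 1) k)) := by
    apply Polynomial.algHom_ext
    simp [inc, Polynomial.coe_mapAlgHom, MvPolynomial.finSuccEquiv_X_zero]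
  have hJ : ∀ p : Polynomial k, (MvPolynomial.finSuccEquiv k 1) (inc p) =
      p.map (algebraMap k (MvPolynomial (Fin 1) k)) := by
    intro p
    have := DFunLike.congr_fun hJhom p
    simpa [Polynomial.coe_mapAlgHom] using this
  -- degree computation
  have hP : (MvPolynomial.finSuccEquiv k 1) F₀ =
      φ.num.map (algebraMap k (MvPolynomial (Fin 1) k)) -
        Polynomial.C (MvPolynomial.X 0) *
          φ.denom.map (algebraMap k (MvPolynomial (Fin 1) k)) := by
    have hsucc : (1 : Fin 2) = Fin.succ 0 := rfl
    rw [hF₀def, map_sub, map_mul, hJ, hJ, hsucc, MvPolynomial.finSuccEquiv_X_succ]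
  have hcoeff : ∀ i, ((MvPolynomial.finSuccEquiv k 1) F₀).coeff i =
      MvPolynomial.C (φ.num.coeff i) - MvPolynomial.X 0 * MvPolynomial.C (φ.denom.coeff i) := by
    intro i
    rw [hP, Polynomial.coeff_sub, Polynomial.coeff_map, Polynomial.coeff_C_mul,
      Polynomial.coeff_map, MvPolynomial.algebraMap_eq]
  set n := max φ.num.natDegree φ.denom.natDegree with hn
  have hdeg : ((MvPolynomial.finSuccEquiv k 1) F₀).natDegree = n := by
    apply le_antisymm
    · rw [Polynomial.natDegree_le_iff_coeff_eq_zero]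
      intro i hi
      rw [hcoeff i, Polynomial.coeff_eq_zero_of_natDegree_lt (lt_of_le_of_lt (le_max_left _ _) hi),
        Polynomial.coeff_eq_zero_of_natDegree_lt (lt_of_le_of_lt (le_max_right _ _) hi)]
      simp
    · apply Polynomial.le_natDegree_of_ne_zero
      rw [hcoeff n]
      intro h
      rw [sub_eq_zero] at h
      have h0 := congrArg MvPolynomial.constantCoeff h
      simp only [MvPolynomial.constantCoeff_C, map_mul, MvPolynomial.constantCoeff_X,
        zero_mul] at h0
      have h1 := congrArg (MvPolynomial.coeff (Finsupp.single 0 1)) h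
      rw [mul_comm, MvPolynomial.coeff_C_mul, MvPolynomial.coeff_X, if_pos rfl, mul_one] at h1
      simp only [MvPolynomial.coeff_C, eq_comm, Finsupp.single_eq_zero, one_ne_zero, zero_ne_one, if_false, reduceIte] at h1
      rcases le_or_gt φ.denom.natDegree φ.num.natDegree with hle | hlt
      · have hmaxl : n = φ.num.natDegree := by rw [hn, max_eq_left hle]
        rw [hmaxl] at h0
        exact Polynomial.leadingCoeff_ne_zero.mpr hu0 h0
      · have hmaxr : n = φ.denom.natDegree := by rw [hn, max_eq_right hlt.le]
        rw [hmaxr] at h1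
        exact Polynomial.leadingCoeff_ne_zero.mpr hw0 h1.symm
  have hdeg0 : F₀.degreeOf 0 = n := by
    rw [← MvPolynomial.natDegree_finSuccEquiv, hdeg]
  -- irreducibility of F₀
  have hF₀_irr : Irreducible F₀ := by
    let inc₁ : Polynomial k →ₐ[k] MvPolynomial (Fin 1) k := Polynomial.aeval (MvPolynomial.X 0)
    have hinc₁_inj : Function.Injective inc₁ :=
      transcendental_iff_injective.mp (MvPolynomial.transcendental_X k 0)
    have hQ : (MvPolynomial.finSuccEquiv k 1)
        ((MvPolynomial.rename (Equiv.swap (0 : Fin 2) 1)) F₀) =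
        Polynomial.C (inc₁ φ.num) - Polynomial.C (inc₁ φ.denom) * Polynomial.X := by
      have hren : ∀ p : Polynomial k,
          (MvPolynomial.rename (Equiv.swap (0 : Fin 2) 1)) (inc p) =
            Polynomial.aeval (MvPolynomial.X 1 : MvPolynomial (Fin 2) k) p := by
        intro p
        show (MvPolynomial.rename (Equiv.swap (0 : Fin 2) 1))
          (Polynomial.aeval (MvPolynomial.X 0) p) = _
        rw [← Polynomial.aeval_algHom_apply, MvPolynomial.rename_X, Equiv.swap_apply_left]
      have hfse : ∀ p : Polynomial k,
          (MvPolynomial.finSuccEquiv k 1)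
            (Polynomial.aeval (MvPolynomial.X 1 : MvPolynomial (Fin 2) k) p) =
            Polynomial.C (inc₁ p) := by
        intro p
        have hsucc : (1 : Fin 2) = Fin.succ 0 := rfl
        rw [← Polynomial.aeval_algHom_apply, hsucc, MvPolynomial.finSuccEquiv_X_succ]
        show Polynomial.aeval ((Polynomial.CAlgHom (R := k)) ((MvPolynomial.X 0 : MvPolynomial (Fin 1) k))) p = _
        rw [Polynomial.aeval_algHom_apply]
        rfl
      rw [hF₀def, map_sub, map_mul, map_sub, map_mul, MvPolynomial.rename_X,
        Equiv.swap_apply_right, hren, hren, hfse, hfse, MvPolynomial.finSuccEquiv_X_zero]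
      ring
    have hlin : Irreducible (Polynomial.C (inc₁ φ.num) -
        Polynomial.C (inc₁ φ.denom) * Polynomial.X) :=
      irreducible_linear_of_isCoprime
        (fun h => hw0 (hinc₁_inj (by rw [h, map_zero])))
        (((RatFunc.isCoprime_num_denom φ).map inc₁.toRingHom).symm)
    have h1 : Irreducible ((MvPolynomial.rename (Equiv.swap (0 : Fin 2) 1)) F₀) := by
      have := hQ ▸ hlin
      have h2 := this.map (MvPolynomial.finSuccEquiv k 1).symm
      rwa [AlgEquiv.symm_apply_apply] at h2
    have h3 := h1.map (MvPolynomial.renameEquiv k (Equiv.swap (0 : Fin 2) 1)).symm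
    have h4 : (MvPolynomial.renameEquiv k (Equiv.swap (0 : Fin 2) 1)).symm
        ((MvPolynomial.rename (Equiv.swap (0 : Fin 2) 1)) F₀) = F₀ := by
      show (MvPolynomial.renameEquiv k (Equiv.swap (0 : Fin 2) 1)).symm
        ((MvPolynomial.renameEquiv k (Equiv.swap (0 : Fin 2) 1)) F₀) = F₀
      exact AlgEquiv.symm_apply_apply _ _
    rwa [h4] at h3
  have := core_finrank F₀ hF₀_irr RatFunc.X φ hroot hgen htr
  rw [this, hdeg0]


end Helpers

section Main
open Polynomial IntermediateField

/-- **Theorem (Statement 6).** If `F ∈ k[X,Y]` is irreducible and `φ, ψ ∈ k(T)` satisfy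
`F(φ,ψ) = 0`, `k(φ,ψ) = k(T)` and `φ, ψ ∉ k`, then the degree of the divisor of zeroes of
`φ` (which equals `max(deg u, deg w)` for `φ = u/w` in lowest terms) equals
`[k(T) : k(φ)] = deg_Y F`, and similarly `deg div₀(ψ) = [k(T) : k(ψ)] = deg_X F`. -/
theorem degree_divisor_of_zeroes_of_parametrization
    {k : Type*} [Field k] (F : MvPolynomial (Fin 2) k) (hF : Irreducible F)
    (φ ψ : RatFunc k)
    (hroot : MvPolynomial.aeval ![φ, ψ] F = 0)
    (hgen : IntermediateField.adjoin k ({φ, ψ} : Set (RatFunc k)) = ⊤)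
    (hφ : φ ∉ Set.range (algebraMap k (RatFunc k)))
    (hψ : ψ ∉ Set.range (algebraMap k (RatFunc k))) :
    (max φ.num.natDegree φ.denom.natDegree =
        Module.finrank (IntermediateField.adjoin k ({φ} : Set (RatFunc k))) (RatFunc k) ∧
      Module.finrank (IntermediateField.adjoin k ({φ} : Set (RatFunc k))) (RatFunc k) =
        F.degreeOf 1) ∧
    (max ψ.num.natDegree ψ.denom.natDegree =
        Module.finrank (IntermediateField.adjoin k ({ψ} : Set (RatFunc k))) (RatFunc k) ∧
      Module.finrank (IntermediateField.adjoin k ({ψ} : Set (RatFunc k))) (RatFunc k) =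
        F.degreeOf 0) := by
  classical
  have htrφ : Transcendental k φ := ratfunc_transcendental hφ
  have htrψ : Transcendental k ψ := ratfunc_transcendental hψ
  have hφ0 : φ ≠ 0 := fun h => hφ ⟨0, by simp [h]⟩
  have hψ0 : ψ ≠ 0 := fun h => hψ ⟨0, by simp [h]⟩
  have hFsw_irr : Irreducible (MvPolynomial.rename (Equiv.swap (0 : Fin 2) 1) F) := by
    have := hF.map (MvPolynomial.renameEquiv k (Equiv.swap (0 : Fin 2) 1))
    exact this
  have hcompv : (![ψ, φ] : Fin 2 → RatFunc k) ∘ (Equiv.swap (0 : Fin 2) 1) = ![φ, ψ] := by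
    funext i
    fin_cases i
    · simp [Equiv.swap_apply_left]
    · simp [Equiv.swap_apply_right]
  have hroot' : MvPolynomial.aeval ![ψ, φ]
      (MvPolynomial.rename (Equiv.swap (0 : Fin 2) 1) F) = 0 := by
    rw [MvPolynomial.aeval_rename, hcompv, hroot]
  have hgen' : IntermediateField.adjoin k ({ψ, φ} : Set (RatFunc k)) = ⊤ := by
    rw [Set.pair_comm]; exact hgen
  have hdeg_sw : (MvPolynomial.rename (Equiv.swap (0 : Fin 2) 1) F).degreeOf 0 =
      F.degreeOf 1 := by
    have h := MvPolynomial.degreeOf_rename_of_injective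
      (Equiv.swap (0 : Fin 2) 1).injective (p := F) 1
    rwa [Equiv.swap_apply_right] at h
  refine ⟨⟨luroth_finrank φ hφ0 htrφ, ?_⟩, luroth_finrank ψ hψ0 htrψ, ?_⟩
  · have h := core_finrank (MvPolynomial.rename (Equiv.swap (0 : Fin 2) 1) F) hFsw_irr
      ψ φ hroot' hgen' htrφ
    rwa [hdeg_sw] at h
  · exact core_finrank F hF φ ψ hroot hgen htrψ

end Main
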